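/- Let W be a nonempty countable subset of the positive reals and L a finite set of labels with |L| ≥ 2. Model a string of the general run-length set ⟨W,L⟩ as a nonempty finite sequence of runs, i.e., pairs (ν, l) ∈ W × L, in which any two consecutive runs carry distinct labels; the weight of a string is the sum of its run-lengths. For s ∈ ℝ let G_W(s) = Σ_{ν∈W} exp(−ν·s) ∈ [0,∞]. Suppose s₀ > 0 satisfies (|L|−1)·G_W(s₀) = 1. Then the abscissa of convergence of the generating function of ⟨W,L⟩, i.e., the infimum of the set {s ∈ ℝ | the family (exp(−w(a)·s))_{a∈⟨W,L⟩} is summable}, equals s₀; consequently the combinatorial capacity of ⟨W,L⟩ is the unique positive real solution of (|L|−1)·G_W(s) = 1. -/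

import Mathlib

open scoped ENNReal
open scoped NNReal

/-- A string of the general run-length set `⟨W,L⟩`: a nonempty finite sequence of runs
`(ν, l) ∈ W × L` in which any two consecutive runs carry distinct labels. -/
def IsRLString {L : Type*} (W : Set ℝ) (a : List (ℝ × L)) : Prop :=
  a ≠ [] ∧ (∀ r ∈ a, r.1 ∈ W) ∧ a.Chain' fun p q => p.2 ≠ q.2

/-- The weight of a string: the sum of its run-lengths. -/
def rlWeight {L : Type*} (a : List (ℝ × L)) : ℝ :=
  (a.map Prod.fst).sum

/-- `G_W(s) = ∑_{ν ∈ W} exp(-ν·s)`, valued in `[0,∞]`. -/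
noncomputable def GW (W : Set ℝ) (s : ℝ) : ℝ≥0∞ :=
  ∑' ν : W, ENNReal.ofReal (Real.exp (-(ν : ℝ) * s))

namespace RLAux
variable {L : Type*} {W : Set ℝ}
noncomputable def term (s : ℝ) (a : List (ℝ × L)) : ℝ≥0∞ :=
  ENNReal.ofReal (Real.exp (-rlWeight a * s))
abbrev Str (W : Set ℝ) (L : Type*) := {a : List (ℝ × L) // IsRLString W a}
abbrev Fib (W : Set ℝ) (L : Type*) (n : ℕ) := {x : Str W L // x.val.length = n}
def headLabel (x : Str W L) : L := (x.val.head x.prop.1).2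
lemma rlWeight_cons (r : ℝ × L) (b : List (ℝ × L)) :
    rlWeight (r :: b) = r.1 + rlWeight b := by simp [rlWeight]
lemma term_cons (s ν : ℝ) (l : L) (b : List (ℝ × L)) :
    term s ((ν, l) :: b) = ENNReal.ofReal (Real.exp (-ν * s)) * term s b := by
  unfold term
  have : -rlWeight ((ν, l) :: b) * s = (-ν * s) + (-rlWeight b * s) := by
    rw [rlWeight_cons]; ring
  rw [this, Real.exp_add, ENNReal.ofReal_mul (Real.exp_nonneg _)]
lemma isRLString_cons {b : List (ℝ × L)} (hb : IsRLString W b) {ν : ℝ} (hν : ν ∈ W)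
    {l : L} (hl : l ≠ (b.head hb.1).2) : IsRLString W ((ν, l) :: b) := by
  refine ⟨List.cons_ne_nil _ _, ?_, ?_⟩
  · intro r hr
    rcases List.mem_cons.1 hr with h | h
    · simpa [h] using hν
    · exact hb.2.1 r h
  · rw [List.Chain', List.isChain_cons]
    refine ⟨?_, hb.2.2⟩
    intro y hy
    rw [List.head?_eq_head hb.1, Option.mem_some_iff] at hy
    subst hy
    exact hl
def consMap (n : ℕ) (x : Σ b : Fib W L (n+1), W × {l : L // l ≠ headLabel b.val}) :
    Fib W L (n+2) :=
  ⟨⟨((x.2.1 : ℝ), (x.2.2 : L)) :: x.1.val.val,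
    isRLString_cons x.1.val.prop x.2.1.prop x.2.2.prop⟩, by
      simp [x.1.prop]⟩
lemma consMap_inj (n : ℕ) : Function.Injective (consMap (W := W) (L := L) n) := by
  rintro ⟨b, p⟩ ⟨b', p'⟩ hxy
  have h1 : (((p.1 : ℝ), (p.2 : L)) : ℝ × L) :: b.val.val
      = ((p'.1 : ℝ), (p'.2 : L)) :: b'.val.val :=
    congrArg (fun z : Fib W L (n+2) => z.val.val) hxy
  simp only [List.cons.injEq, Prod.mk.injEq] at h1
  obtain ⟨⟨hν, hl⟩, ht⟩ := h1
  have hbb : b = b' := Subtype.ext (Subtype.ext ht)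
  subst hbb
  have hp : p = p' := Prod.ext (Subtype.ext hν) (Subtype.ext hl)
  rw [hp]

-- decomposition
lemma tail_len {n : ℕ} (a : Fib W L (n+2)) : a.val.val.tail.length = n + 1 := by
  rw [List.length_tail, a.prop]; rfl

lemma tail_ne_nil {n : ℕ} (a : Fib W L (n+2)) : a.val.val.tail ≠ [] := by
  intro h
  have := tail_len a
  rw [h] at this
  simp at this

lemma tail_str {n : ℕ} (a : Fib W L (n+2)) : IsRLString W a.val.val.tail :=
  ⟨tail_ne_nil a, fun r hr => a.val.prop.2.1 r (List.mem_of_mem_tail hr),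
    a.val.prop.2.2.tail⟩

lemma head_fst_mem {n : ℕ} (a : Fib W L (n+2)) :
    (a.val.val.head a.val.prop.1).1 ∈ W :=
  a.val.prop.2.1 _ (List.head_mem _)

lemma head_snd_ne {n : ℕ} (a : Fib W L (n+2)) :
    (a.val.val.head a.val.prop.1).2 ≠ headLabel (⟨a.val.val.tail, tail_str a⟩ : Str W L) := by
  have hch := a.val.prop.2.2
  rw [← List.cons_head_tail a.val.prop.1, List.Chain', List.isChain_cons] at hch
  exact hch.1 _ (by rw [List.head?_eq_head (tail_ne_nil a)]; rfl)

def decMap (n : ℕ) (a : Fib W L (n+2)) :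
    Σ b : Fib W L (n+1), W × {l : L // l ≠ headLabel b.val} :=
  ⟨⟨⟨a.val.val.tail, tail_str a⟩, tail_len a⟩,
    ⟨(a.val.val.head a.val.prop.1).1, head_fst_mem a⟩,
    ⟨(a.val.val.head a.val.prop.1).2, head_snd_ne a⟩⟩

lemma consMap_decMap (n : ℕ) (a : Fib W L (n+2)) : consMap n (decMap n a) = a := by
  apply Subtype.ext
  apply Subtype.ext
  show ((a.val.val.head a.val.prop.1).1, (a.val.val.head a.val.prop.1).2)
      :: a.val.val.tail = a.val.val
  rw [Prod.mk.eta, List.cons_head_tail]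


noncomputable def gs (W : Set ℝ) (L : Type*) (s : ℝ) (n : ℕ) : ℝ≥0∞ :=
  ∑' a : Fib W L n, term s a.val.val

lemma tsum_label_const [Fintype L] (l₀ : L) (c : ℝ≥0∞) :
    ∑' _ : {l : L // l ≠ l₀}, c = ((Fintype.card L : ℝ≥0∞) - 1) * c := by
  classical
  rw [tsum_fintype, Finset.sum_const, Finset.card_univ, nsmul_eq_mul]
  congr 1
  have : Fintype.card {l : L // l ≠ l₀} = Fintype.card L - 1 := by
    simp [Fintype.card_subtype_compl, Fintype.card_subtype_eq]
  rw [this, ENNReal.natCast_sub, Nat.cast_one]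

lemma tsum_sigma_cons [Fintype L] (s : ℝ) (n : ℕ) :
    ∑' x : Σ b : Fib W L (n+1), W × {l : L // l ≠ headLabel b.val},
        term s (consMap n x).val.val
      = ((Fintype.card L : ℝ≥0∞) - 1) * GW W s * gs W L s (n+1) := by
  classical
  rw [ENNReal.tsum_sigma']
  have inner : ∀ b : Fib W L (n+1),
      (∑' p : W × {l : L // l ≠ headLabel b.val}, term s (consMap n ⟨b, p⟩).val.val)
        = ((Fintype.card L : ℝ≥0∞) - 1) * (GW W s * term s b.val.val) := by
    intro b
    have h1 : ∀ p : W × {l : L // l ≠ headLabel b.val},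
        term s (consMap n ⟨b, p⟩).val.val
          = ENNReal.ofReal (Real.exp (-(p.1 : ℝ) * s)) * term s b.val.val := by
      intro p; exact term_cons s _ _ _
    rw [tsum_congr h1, ENNReal.tsum_prod']
    have h2 : ∀ ν : W,
        (∑' _ : {l : L // l ≠ headLabel b.val},
            ENNReal.ofReal (Real.exp (-(ν : ℝ) * s)) * term s b.val.val)
          = ((Fintype.card L : ℝ≥0∞) - 1)
              * (ENNReal.ofReal (Real.exp (-(ν : ℝ) * s)) * term s b.val.val) := by
      intro ν; exact tsum_label_const _ _
    rw [tsum_congr h2, ENNReal.tsum_mul_left]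
    congr 1
    rw [ENNReal.tsum_mul_right]
    rfl
  rw [tsum_congr inner, ENNReal.tsum_mul_left, gs, ENNReal.tsum_mul_left, mul_assoc]

lemma gs_succ_succ [Fintype L] (s : ℝ) (n : ℕ) :
    gs W L s (n+2) = ((Fintype.card L : ℝ≥0∞) - 1) * GW W s * gs W L s (n+1) := by
  apply le_antisymm
  · calc gs W L s (n+2)
        = ∑' a : Fib W L (n+2),
            (fun x => term s (consMap n x).val.val) (decMap n a) := by
          refine tsum_congr fun a => ?_
          simp only [consMap_decMap]
      _ ≤ ∑' x, (fun x => term s (consMap n x).val.val) x :=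
          ENNReal.tsum_comp_le_tsum_of_injective
            (Function.LeftInverse.injective (consMap_decMap n)) _
      _ = _ := tsum_sigma_cons s n
  · calc ((Fintype.card L : ℝ≥0∞) - 1) * GW W s * gs W L s (n+1)
        = ∑' x : Σ b : Fib W L (n+1), W × {l : L // l ≠ headLabel b.val},
            term s (consMap n x).val.val := (tsum_sigma_cons s n).symm
      _ ≤ gs W L s (n+2) :=
          ENNReal.tsum_comp_le_tsum_of_injective (consMap_inj n)
            (fun a => term s a.val.val)

lemma isRLString_singleton {ν : ℝ} (hν : ν ∈ W) (l : L) :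
    IsRLString W [(ν, l)] :=
  ⟨List.cons_ne_nil _ _, by simpa using hν, List.isChain_singleton _⟩

def singMap (p : W × L) : Fib W L 1 :=
  ⟨⟨[((p.1 : ℝ), p.2)], isRLString_singleton p.1.prop p.2⟩, rfl⟩

lemma singMap_inj : Function.Injective (singMap (W := W) (L := L)) := by
  rintro ⟨ν, l⟩ ⟨ν', l'⟩ hxy
  have h1 : [(((ν : ℝ), l) : ℝ × L)] = [((ν' : ℝ), l')] :=
    congrArg (fun z : Fib W L 1 => z.val.val) hxy
  simp only [List.cons.injEq, Prod.mk.injEq] at h1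
  exact Prod.ext (Subtype.ext h1.1.1) h1.1.2

lemma term_singleton (s ν : ℝ) (l : L) :
    term s [(ν, l)] = ENNReal.ofReal (Real.exp (-ν * s)) := by
  simp [term, rlWeight]

lemma tsum_sing [Fintype L] (s : ℝ) :
    ∑' p : W × L, term s (singMap p).val.val = (Fintype.card L : ℝ≥0∞) * GW W s := by
  have h1 : ∀ p : W × L, term s (singMap p).val.val
      = ENNReal.ofReal (Real.exp (-(p.1 : ℝ) * s)) := fun p => term_singleton s _ _
  rw [tsum_congr h1, ENNReal.tsum_prod']
  have h2 : ∀ ν : W, (∑' _ : L, ENNReal.ofReal (Real.exp (-(ν : ℝ) * s)))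
      = (Fintype.card L : ℝ≥0∞) * ENNReal.ofReal (Real.exp (-(ν : ℝ) * s)) := by
    intro ν
    rw [tsum_fintype, Finset.sum_const, Finset.card_univ, nsmul_eq_mul]
  rw [tsum_congr h2, ENNReal.tsum_mul_left]
  rfl

lemma sing_len_tail {a : Fib W L 1} : a.val.val.tail = [] := by
  have : a.val.val.tail.length = 0 := by rw [List.length_tail, a.prop]
  exact List.length_eq_zero_iff.1 this

def decSing (a : Fib W L 1) : W × L :=
  (⟨(a.val.val.head a.val.prop.1).1, a.val.prop.2.1 _ (List.head_mem _)⟩,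
    (a.val.val.head a.val.prop.1).2)

lemma singMap_decSing (a : Fib W L 1) : singMap (decSing a) = a := by
  apply Subtype.ext
  apply Subtype.ext
  show [((a.val.val.head a.val.prop.1).1, (a.val.val.head a.val.prop.1).2)] = a.val.val
  rw [Prod.mk.eta]
  conv_rhs => rw [← List.cons_head_tail a.val.prop.1]
  rw [sing_len_tail]

lemma gs_one [Fintype L] (s : ℝ) :
    gs W L s 1 = (Fintype.card L : ℝ≥0∞) * GW W s := by
  apply le_antisymm
  · calc gs W L s 1
        = ∑' a : Fib W L 1, (fun p => term s (singMap p).val.val) (decSing a) := by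
          refine tsum_congr fun a => ?_
          simp only [singMap_decSing]
      _ ≤ ∑' p : W × L, term s (singMap p).val.val :=
          ENNReal.tsum_comp_le_tsum_of_injective
            (Function.LeftInverse.injective singMap_decSing) _
      _ = _ := tsum_sing s
  · calc (Fintype.card L : ℝ≥0∞) * GW W s
        = ∑' p : W × L, term s (singMap p).val.val := (tsum_sing s).symm
      _ ≤ gs W L s 1 :=
          ENNReal.tsum_comp_le_tsum_of_injective singMap_inj (fun a => term s a.val.val)

lemma gs_zero (s : ℝ) : gs W L s 0 = 0 := by
  have : IsEmpty (Fib W L 0) := by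
    refine ⟨fun a => a.val.prop.1 ?_⟩
    exact List.length_eq_zero_iff.1 a.prop
  rw [gs, tsum_empty]

lemma gs_closed [Fintype L] (s : ℝ) (n : ℕ) :
    gs W L s (n+1) = (((Fintype.card L : ℝ≥0∞) - 1) * GW W s) ^ n
      * ((Fintype.card L : ℝ≥0∞) * GW W s) := by
  induction n with
  | zero => simpa using gs_one s
  | succ k ih => rw [gs_succ_succ, ih, pow_succ]; ring

lemma F_eq [Fintype L] (s : ℝ) :
    (∑' a : Str W L, term s a.val) = ∑' n, gs W L s n := by
  rw [← (Equiv.sigmaFiberEquiv fun a : Str W L => a.val.length).tsum_eq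
    fun a => term s a.val]
  rw [ENNReal.tsum_sigma']
  rfl


lemma GW_anti (hWpos : ∀ ν ∈ W, 0 < ν) {s t : ℝ} (hst : s ≤ t) : GW W t ≤ GW W s :=
  ENNReal.tsum_le_tsum fun ν => by
    apply ENNReal.ofReal_le_ofReal
    apply Real.exp_le_exp.2
    have hν := (hWpos ν ν.prop).le
    nlinarith

open Classical in
lemma GW_strict_anti (hWpos : ∀ ν ∈ W, 0 < ν) (hWne : W.Nonempty) {s t : ℝ}
    (hst : s < t) (hfin : GW W s ≠ ⊤) : GW W t < GW W s := by
  obtain ⟨ν₀, hν₀⟩ := hWne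
  set i : W := ⟨ν₀, hν₀⟩ with hi
  have key : ∀ u : ℝ, GW W u = ENNReal.ofReal (Real.exp (-ν₀ * u))
      + ∑' ν : W, if ν = i then 0 else ENNReal.ofReal (Real.exp (-(ν : ℝ) * u)) := by
    intro u
    rw [GW, ENNReal.tsum_eq_add_tsum_ite i]
    congr!
  have hrest_le : (∑' ν : W, if ν = i then 0 else ENNReal.ofReal (Real.exp (-(ν : ℝ) * t)))
      ≤ ∑' ν : W, if ν = i then 0 else ENNReal.ofReal (Real.exp (-(ν : ℝ) * s)) := by
    refine ENNReal.tsum_le_tsum fun ν => ?_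
    split
    · exact le_rfl
    · apply ENNReal.ofReal_le_ofReal
      apply Real.exp_le_exp.2
      have hν := (hWpos ν ν.prop).le
      nlinarith [hst.le]
  have hrest_fin : (∑' ν : W, if ν = i then 0 else ENNReal.ofReal (Real.exp (-(ν : ℝ) * s))) ≠ ⊤ := by
    intro htop
    apply hfin
    rw [key s, htop]
    simp
  have hf : ENNReal.ofReal (Real.exp (-ν₀ * t)) < ENNReal.ofReal (Real.exp (-ν₀ * s)) := by
    rw [ENNReal.ofReal_lt_ofReal_iff (Real.exp_pos _)]
    apply Real.exp_lt_exp.2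
    have hν := hWpos ν₀ hν₀
    nlinarith
  rw [key t, key s]
  calc ENNReal.ofReal (Real.exp (-ν₀ * t))
        + (∑' ν : W, if ν = i then 0 else ENNReal.ofReal (Real.exp (-(ν : ℝ) * t)))
      ≤ ENNReal.ofReal (Real.exp (-ν₀ * t))
        + (∑' ν : W, if ν = i then 0 else ENNReal.ofReal (Real.exp (-(ν : ℝ) * s))) :=
        add_le_add_right hrest_le _
    _ < _ := ENNReal.add_lt_add_right hrest_fin hf

lemma summable_iff (s : ℝ) :
    Summable (fun a : Str W L => Real.exp (-rlWeight a.val * s))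
      ↔ (∑' a : Str W L, term s a.val) ≠ ⊤ := by
  have h1 : (∑' a : Str W L, term s a.val)
      = ∑' a : Str W L,
          ((Real.toNNReal (Real.exp (-rlWeight a.val * s)) : ℝ≥0) : ℝ≥0∞) := rfl
  rw [h1, ENNReal.tsum_coe_ne_top_iff_summable, ← NNReal.summable_coe]
  exact summable_congr fun a => by rw [Real.coe_toNNReal _ (Real.exp_nonneg _)]

end RLAux

open RLAux

/-- **Proposition 1 of the paper** (capacity of `⟨W,L⟩`): if `s₀ > 0` solves
`(|L|-1)·G_W(s₀) = 1`, then the abscissa of convergence of the generating function of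
`⟨W,L⟩` equals `s₀`; hence the combinatorial capacity of `⟨W,L⟩` is the unique positive
real solution of `(|L|-1)·G_W(s) = 1`. -/
theorem abscissa_of_run_length_set
    {L : Type*} [Fintype L] (hL : 2 ≤ Fintype.card L)
    (W : Set ℝ) (hWne : W.Nonempty) (hWc : W.Countable) (hWpos : ∀ ν ∈ W, 0 < ν)
    (s₀ : ℝ) (hs₀ : 0 < s₀)
    (h : ((Fintype.card L : ℝ≥0∞) - 1) * GW W s₀ = 1) :
    sInf {s : ℝ | Summable fun a : {a : List (ℝ × L) // IsRLString W a} =>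
      Real.exp (-rlWeight (a : List (ℝ × L)) * s)} = s₀ := by
  classical
  have hC' : ((Fintype.card L : ℝ≥0∞) - 1) = ((Fintype.card L - 1 : ℕ) : ℝ≥0∞) := by
    rw [ENNReal.natCast_sub, Nat.cast_one]
  have hCne0 : ((Fintype.card L : ℝ≥0∞) - 1) ≠ 0 := by
    rw [hC', Ne, Nat.cast_eq_zero]
    omega
  have hCtop : ((Fintype.card L : ℝ≥0∞) - 1) ≠ ⊤ := by
    rw [hC']; exact ENNReal.natCast_ne_top _
  have hGfin : GW W s₀ ≠ ⊤ := by
    intro ht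
    rw [ht, ENNReal.mul_top hCne0] at h
    exact ENNReal.top_ne_one h
  have hmem : ∀ s : ℝ,
      (Summable fun a : Str W L => Real.exp (-rlWeight a.val * s)) ↔ s₀ < s := by
    intro s
    rw [summable_iff, F_eq]
    constructor
    · intro hne
      by_contra hle
      push_neg at hle
      apply hne
      have hK : (1 : ℝ≥0∞) ≤ ((Fintype.card L : ℝ≥0∞) - 1) * GW W s := by
        conv_lhs => rw [← h]
        exact mul_le_mul_right (GW_anti hWpos hle) _
      have hM : (1 : ℝ≥0∞) ≤ (Fintype.card L : ℝ≥0∞) * GW W s := by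
        refine hK.trans (mul_le_mul_left ?_ _)
        exact tsub_le_self
      have hge : ∀ n : ℕ, (1 : ℝ≥0∞) ≤ gs W L s (n + 1) := by
        intro n
        rw [gs_closed]
        calc (1 : ℝ≥0∞) = 1 * 1 := (one_mul 1).symm
          _ ≤ _ := mul_le_mul' (one_le_pow_of_one_le' hK n) hM
      have htop : (⊤ : ℝ≥0∞) ≤ ∑' n, gs W L s n := by
        calc (⊤ : ℝ≥0∞) = ∑' _ : ℕ, (1 : ℝ≥0∞) :=
              (ENNReal.tsum_const_eq_top_of_ne_zero one_ne_zero).symm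
          _ ≤ ∑' n : ℕ, gs W L s (n + 1) := ENNReal.tsum_le_tsum hge
          _ ≤ ∑' n, gs W L s n :=
              ENNReal.tsum_comp_le_tsum_of_injective Nat.succ_injective _
      exact top_le_iff.1 htop
    · intro hs
      have hGlt : GW W s < GW W s₀ := GW_strict_anti hWpos hWne hs hGfin
      have hK : ((Fintype.card L : ℝ≥0∞) - 1) * GW W s < 1 := by
        conv_rhs => rw [← h]
        exact ENNReal.mul_lt_mul_right hCne0 hCtop hGlt
      rw [tsum_eq_zero_add' ENNReal.summable, gs_zero, zero_add,
        tsum_congr (gs_closed s), ENNReal.tsum_mul_right, ENNReal.tsum_geometric]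
      apply ENNReal.mul_ne_top
      · rw [Ne, ENNReal.inv_eq_top]
        exact (tsub_pos_of_lt hK).ne'
      · refine ENNReal.mul_ne_top (ENNReal.natCast_ne_top _) ?_
        exact ((GW_anti hWpos hs.le).trans_lt (lt_top_iff_ne_top.2 hGfin)).ne
  have hset : {s : ℝ | Summable fun a : {a : List (ℝ × L) // IsRLString W a} =>
      Real.exp (-rlWeight (a : List (ℝ × L)) * s)} = Set.Ioi s₀ := by
    ext s
    rw [Set.mem_setOf_eq, Set.mem_Ioi]
    exact hmem s
  rw [hset]
  exact csInf_Ioi
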